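/- For every natural number k ≥ 2 there exist vectors v_1, …, v_k ∈ {−1, 1}^d with d = ⌈4·log₂ k⌉ such that for all i ≠ j one has |⟨v_i, v_j⟩| ≤ 3·log₂ k. -/

import Mathlib

-- 2*C(d,m) ≤ C(d,m+1) when 3m+2 ≤ d
lemma two_choose_le (d m : ℕ) (h : 3*m + 2 ≤ d) :
    2 * d.choose m ≤ d.choose (m+1) := by
  have key := Nat.choose_succ_right_eq d m
  have h2 : 2*(m+1) ≤ d - m := by omega
  have : 2 * d.choose m * (m+1) ≤ d.choose (m+1) * (m+1) := by
    rw [key]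
    calc 2 * d.choose m * (m+1) = d.choose m * (2*(m+1)) := by ring
    _ ≤ d.choose m * (d - m) := Nat.mul_le_mul_left _ h2
  exact Nat.le_of_mul_le_mul_right this (by omega)

-- geometric sum bound
lemma sum_choose_le (d M : ℕ) (h : 3*M ≤ d + 1) :
    ∑ j ∈ Finset.range (M+1), d.choose j ≤ 2 * d.choose M := by
  induction M with
  | zero => simp
  | succ m ih =>
    rw [Finset.sum_range_succ]
    have h1 : 3*m + 2 ≤ d := by omega
    have h2 := two_choose_le d m h1
    have h3 := ih (by omega)
    calc ∑ j ∈ Finset.range (m+1), d.choose j + d.choose (m+1)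
        ≤ 2 * d.choose m + d.choose (m+1) := by omega
      _ ≤ 2 * d.choose (m+1) := by omega

-- d-step: 2*C(d+1,M) ≤ 3*C(d,M) for M ≥ 1, 3M ≤ d+1
lemma choose_succ_step (d m : ℕ) (h : 3*(m+1) ≤ d + 1) :
    2 * (d+1).choose (m+1) ≤ 3 * d.choose (m+1) := by
  have e : (d+1).choose (m+1) = d.choose m + d.choose (m+1) := Nat.choose_succ_succ d m
  have h2 := two_choose_le d m (by omega)
  omega

-- hop polynomial
lemma hop_poly (m : ℕ) :
    (8*m+15)*(8*m+16)*(8*m+17)*(8*m+18)*(8*m+19)*(8*m+20)*(8*m+21)*(8*m+22)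
    ≤ 64*(m+3)*((7*m+13)*(7*m+14)*(7*m+15)*(7*m+16)*(7*m+17)*(7*m+18)*(7*m+19)) := by
  have : 64*(m+3)*((7*m+13)*(7*m+14)*(7*m+15)*(7*m+16)*(7*m+17)*(7*m+18)*(7*m+19))
      = (8*m+15)*(8*m+16)*(8*m+17)*(8*m+18)*(8*m+19)*(8*m+20)*(8*m+21)*(8*m+22)
        + (35929536*m^8 + 691049792*m^7 + 5790927744*m^6 + 27617840768*m^5
           + 81994551744*m^4 + 155189588288*m^3 + 182872152576*m^2
           + 122671562112*m + 35866333440) := by ring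
  omega

lemma hop (m : ℕ) :
    (8*m+22).choose (m+3) ≤ 64 * (8*m+14).choose (m+2) := by
  have hfac1 : (8*m+22).choose (m+3) * (m+3).factorial * (7*m+19).factorial
      = (8*m+22).factorial := by
    have := Nat.choose_mul_factorial_mul_factorial (n := 8*m+22) (k := m+3) (by omega)
    rwa [show 8*m+22 - (m+3) = 7*m+19 by omega] at this
  have hfac2 : (8*m+14).choose (m+2) * (m+2).factorial * (7*m+12).factorial
      = (8*m+14).factorial := by
    have := Nat.choose_mul_factorial_mul_factorial (n := 8*m+14) (k := m+2) (by omega)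
    rwa [show 8*m+14 - (m+2) = 7*m+12 by omega] at this
  have e1 : (8*m+22).factorial
      = ((8*m+15)*(8*m+16)*(8*m+17)*(8*m+18)*(8*m+19)*(8*m+20)*(8*m+21)*(8*m+22))
        * (8*m+14).factorial := by
    rw [show 8*m+22 = (8*m+21)+1 by omega, Nat.factorial_succ]
    rw [show 8*m+21 = (8*m+20)+1 by omega, Nat.factorial_succ]
    rw [show 8*m+20 = (8*m+19)+1 by omega, Nat.factorial_succ]
    rw [show 8*m+19 = (8*m+18)+1 by omega, Nat.factorial_succ]
    rw [show 8*m+18 = (8*m+17)+1 by omega, Nat.factorial_succ]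
    rw [show 8*m+17 = (8*m+16)+1 by omega, Nat.factorial_succ]
    rw [show 8*m+16 = (8*m+15)+1 by omega, Nat.factorial_succ]
    rw [show 8*m+15 = (8*m+14)+1 by omega, Nat.factorial_succ]
    ring
  have e2 : (7*m+19).factorial
      = ((7*m+13)*(7*m+14)*(7*m+15)*(7*m+16)*(7*m+17)*(7*m+18)*(7*m+19))
        * (7*m+12).factorial := by
    rw [show 7*m+19 = (7*m+18)+1 by omega, Nat.factorial_succ]
    rw [show 7*m+18 = (7*m+17)+1 by omega, Nat.factorial_succ]
    rw [show 7*m+17 = (7*m+16)+1 by omega, Nat.factorial_succ]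
    rw [show 7*m+16 = (7*m+15)+1 by omega, Nat.factorial_succ]
    rw [show 7*m+15 = (7*m+14)+1 by omega, Nat.factorial_succ]
    rw [show 7*m+14 = (7*m+13)+1 by omega, Nat.factorial_succ]
    rw [show 7*m+13 = (7*m+12)+1 by omega, Nat.factorial_succ]
    ring
  have e3 : (m+3).factorial = (m+3) * (m+2).factorial := Nat.factorial_succ (m+2)
  -- cancel by positive factor (m+3)! * (7m+19)!
  have hpos : 0 < (m+3).factorial * (7*m+19).factorial :=
    Nat.mul_pos (Nat.factorial_pos _) (Nat.factorial_pos _)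
  refine Nat.le_of_mul_le_mul_right ?_ hpos
  calc (8*m+22).choose (m+3) * ((m+3).factorial * (7*m+19).factorial)
      = (8*m+22).choose (m+3) * (m+3).factorial * (7*m+19).factorial := by ring
    _ = (8*m+22).factorial := hfac1
    _ = ((8*m+15)*(8*m+16)*(8*m+17)*(8*m+18)*(8*m+19)*(8*m+20)*(8*m+21)*(8*m+22))
        * (8*m+14).factorial := e1
    _ ≤ (64*(m+3)*((7*m+13)*(7*m+14)*(7*m+15)*(7*m+16)*(7*m+17)*(7*m+18)*(7*m+19)))
        * (8*m+14).factorial := Nat.mul_le_mul_right _ (hop_poly m)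
    _ = 64*(m+3)*((7*m+13)*(7*m+14)*(7*m+15)*(7*m+16)*(7*m+17)*(7*m+18)*(7*m+19))
        * ((8*m+14).choose (m+2) * (m+2).factorial * (7*m+12).factorial) := by
        rw [hfac2]
    _ = 64 * (8*m+14).choose (m+2) * ((m+3).factorial * (7*m+19).factorial) := by
        rw [e2, e3]; ring

lemma core_step (d r : ℕ) (h3 : 3*(r+1) ≤ d + 1)
    (ih : 256 * (d.choose (r+1))^4 < 2^(3*d)) :
    256 * ((d+1).choose (r+1))^4 < 2^(3*(d+1)) := by
  have h2 := choose_succ_step d r h3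
  have h4 : (2 * (d+1).choose (r+1))^4 ≤ (3 * d.choose (r+1))^4 :=
    Nat.pow_le_pow_left h2 4
  have h5 : 16 * ((d+1).choose (r+1))^4 ≤ 81 * (d.choose (r+1))^4 := by
    calc 16 * ((d+1).choose (r+1))^4 = (2 * (d+1).choose (r+1))^4 := by ring
      _ ≤ (3 * d.choose (r+1))^4 := h4
      _ = 81 * (d.choose (r+1))^4 := by ring
  have key : 16 * (256 * ((d+1).choose (r+1))^4) < 16 * 2^(3*(d+1)) := by
    calc 16 * (256 * ((d+1).choose (r+1))^4)
        = 256 * (16 * ((d+1).choose (r+1))^4) := by ring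
      _ ≤ 256 * (81 * (d.choose (r+1))^4) := Nat.mul_le_mul_left _ h5
      _ = 81 * (256 * (d.choose (r+1))^4) := by ring
      _ < 81 * 2^(3*d) := mul_lt_mul_of_pos_left ih (by norm_num)
      _ ≤ 128 * 2^(3*d) := Nat.mul_le_mul_right _ (by norm_num)
      _ = 16 * 2^(3*(d+1)) := by rw [show 3*(d+1) = 3*d+3 by ring, pow_add]; ring
  exact Nat.lt_of_mul_lt_mul_left key

lemma core1 (d : ℕ) (hd : 7 ≤ d) : 256 * (d.choose 1)^4 < 2^(3*d) := by
  induction d, hd using Nat.le_induction with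
  | base => norm_num [Nat.choose]
  | succ d hd ih => exact core_step d 0 (by omega) ih

lemma core2 (m : ℕ) : ∀ d, 8*m+14 ≤ d → 256 * (d.choose (m+2))^4 < 2^(3*d) := by
  induction m with
  | zero =>
    intro d hd
    induction d, hd using Nat.le_induction with
    | base => norm_num [Nat.choose]
    | succ d hd ih => exact core_step d 1 (by omega) ih
  | succ m ih =>
    intro d hd
    induction d, hd using Nat.le_induction with
    | base =>
      have h1 := hop m
      have h2 := ih (8*m+14) (le_refl _)
      have h3 : ((8*m+22).choose (m+3))^4 ≤ (64 * (8*m+14).choose (m+2))^4 :=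
        Nat.pow_le_pow_left h1 4
      have : 256 * ((8*m+22).choose (m+3))^4
          ≤ 16777216 * (256 * ((8*m+14).choose (m+2))^4) := by
        calc 256 * ((8*m+22).choose (m+3))^4
            ≤ 256 * (64 * (8*m+14).choose (m+2))^4 := Nat.mul_le_mul_left _ h3
          _ = 16777216 * (256 * ((8*m+14).choose (m+2))^4) := by ring
      calc 256 * ((8*(m+1)+14).choose (m+1+2))^4
          = 256 * ((8*m+22).choose (m+3))^4 := by
            congr 2 <;> omega
        _ ≤ 16777216 * (256 * ((8*m+14).choose (m+2))^4) := this
        _ < 16777216 * 2^(3*(8*m+14)) := mul_lt_mul_of_pos_left h2 (by norm_num)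
        _ = 2^(3*(8*(m+1)+14)) := by
            rw [show (16777216:ℕ) = 2^24 by norm_num, ← pow_add]
            congr 1; ring
    | succ d hd2 ih2 => exact core_step d (m+2) (by omega) ih2

lemma core (d M : ℕ) (h8 : 8*M ≤ d + 2) (hd : d = 4 ∨ 7 ≤ d) :
    256 * (d.choose M)^4 < 2^(3*d) := by
  match M with
  | 0 =>
    simp only [Nat.choose_zero_right, one_pow, mul_one]
    calc (256:ℕ) = 2^8 := by norm_num
      _ < 2^(3*d) := Nat.pow_lt_pow_right (by norm_num) (by omega)
  | 1 =>
    have : 7 ≤ d := by omega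
    exact core1 d this
  | (m+2) => exact core2 m d (by omega)

open Finset in
lemma sphere_card_le (n : ℕ) (u : Fin n → Bool) (j : ℕ) :
    (univ.filter fun w : Fin n → Bool => (univ.filter fun t => u t ≠ w t).card = j).card
      ≤ n.choose j := by
  classical
  have : ((univ : Finset (Fin n)).powersetCard j).card = n.choose j := by
    rw [Finset.card_powersetCard, Finset.card_univ, Fintype.card_fin]
  rw [← this]
  apply Finset.card_le_card_of_injOn (fun w => univ.filter fun t => u t ≠ w t)
  · intro w hw
    simp only [Finset.mem_coe, Finset.mem_filter, Finset.mem_univ, true_and] at hw ⊢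
    rw [Finset.mem_powersetCard]
    exact ⟨Finset.filter_subset _ _, hw⟩
  · intro w1 h1 w2 h2 heq
    have heq' : (univ.filter fun t => u t ≠ w1 t) = univ.filter fun t => u t ≠ w2 t := heq
    funext t
    by_cases h : u t ≠ w1 t
    · have ht1 : t ∈ univ.filter fun t => u t ≠ w1 t := by simp [h]
      rw [heq'] at ht1
      simp only [Finset.mem_filter] at ht1
      revert h ht1; cases u t <;> cases w1 t <;> cases w2 t <;> simp
    · have ht1 : t ∉ univ.filter fun t => u t ≠ w2 t := by
        rw [← heq']; simp only [Finset.mem_filter]; tauto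
      simp only [Finset.mem_filter, Finset.mem_univ, true_and, not_not] at ht1 h
      rw [← h, ht1]

open Finset in
lemma ball_card_le (n : ℕ) (u : Fin n → Bool) (M : ℕ) :
    (univ.filter fun w : Fin n → Bool => (univ.filter fun t => u t ≠ w t).card ≤ M).card
      ≤ ∑ j ∈ range (M+1), n.choose j := by
  classical
  have hsub : (univ.filter fun w : Fin n → Bool =>
      (univ.filter fun t => u t ≠ w t).card ≤ M)
      ⊆ (range (M+1)).biUnion (fun j => univ.filter
          fun w : Fin n → Bool => (univ.filter fun t => u t ≠ w t).card = j) := by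
    intro w hw
    simp only [Finset.mem_filter, Finset.mem_univ, true_and] at hw
    rw [Finset.mem_biUnion]
    exact ⟨(univ.filter fun t => u t ≠ w t).card, Finset.mem_range.mpr (by omega), by
      simp only [Finset.mem_filter, Finset.mem_univ, true_and]⟩
  calc _ ≤ _ := Finset.card_le_card hsub
    _ ≤ ∑ j ∈ range (M+1), (univ.filter fun w : Fin n → Bool =>
          (univ.filter fun t => u t ≠ w t).card = j).card := Finset.card_biUnion_le
    _ ≤ ∑ j ∈ range (M+1), n.choose j :=
        Finset.sum_le_sum fun j _ => sphere_card_le n u j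

open Finset in
lemma greedy {α : Type*} [Fintype α] [DecidableEq α] (k B : ℕ)
    (Bad : α → Finset α) (hBad : ∀ u, (Bad u).card ≤ B)
    (hself : ∀ u, u ∈ Bad u) (hsym : ∀ u w, u ∈ Bad w → w ∈ Bad u)
    (hcount : k * B < Fintype.card α) :
    ∃ S : Finset α, S.card = k ∧ ∀ u ∈ S, ∀ w ∈ S, u ≠ w → w ∉ Bad u := by
  classical
  have H : ∀ n, n ≤ k → ∃ S : Finset α, S.card = n ∧
      ∀ u ∈ S, ∀ w ∈ S, u ≠ w → w ∉ Bad u := by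
    intro n
    induction n with
    | zero => exact fun _ => ⟨∅, by simp⟩
    | succ n ih =>
      intro hnk
      obtain ⟨S, hScard, hSgood⟩ := ih (by omega)
      have hcard : (S.biUnion Bad).card < Fintype.card α := by
        calc (S.biUnion Bad).card ≤ ∑ u ∈ S, (Bad u).card := Finset.card_biUnion_le
          _ ≤ ∑ _u ∈ S, B := Finset.sum_le_sum fun u _ => hBad u
          _ = n * B := by rw [Finset.sum_const, hScard, smul_eq_mul]
          _ ≤ k * B := Nat.mul_le_mul_right _ (by omega)
          _ < Fintype.card α := hcount
      have h2 : ((S.biUnion Bad)ᶜ).Nonempty := by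
        rw [← Finset.card_pos, Finset.card_compl]
        omega
      obtain ⟨w, hw⟩ := h2
      rw [Finset.mem_compl] at hw
      have hwBad : ∀ u ∈ S, w ∉ Bad u := by
        intro u hu hmem
        exact hw (Finset.mem_biUnion.mpr ⟨u, hu, hmem⟩)
      have hwS : w ∉ S := fun hwS => hwBad w hwS (hself w)
      refine ⟨insert w S, ?_, ?_⟩
      · rw [Finset.card_insert_of_notMem hwS, hScard]
      · intro u hu v hv huv
        rw [Finset.mem_insert] at hu hv
        rcases hu with rfl | hu
        · rcases hv with rfl | hv
          · exact absurd rfl huv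
          · intro hmem
            exact hwBad v hv (hsym _ _ hmem)
        · rcases hv with rfl | hv
          · exact hwBad u hu
          · exact hSgood u hu v hv huv
  exact H k le_rfl


open Finset

theorem near_orthogonal_sign_vectors (k : ℕ) (hk : 2 ≤ k) :
    ∃ v : Fin k → Fin ⌈(4 : ℝ) * Real.logb 2 k⌉₊ → ℝ,
      (∀ i t, v i t = 1 ∨ v i t = -1) ∧
      ∀ i j, i ≠ j → |∑ t, v i t * v j t| ≤ 3 * Real.logb 2 k := by
  classical
  set L : ℝ := Real.logb 2 k with hLdef
  set n : ℕ := ⌈(4 : ℝ) * L⌉₊ with hndef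
  -- basic facts about L and n
  have hL1 : (1:ℝ) ≤ L := by
    rw [hLdef, show (1:ℝ) = Real.logb 2 2 from (Real.logb_self_eq_one (by norm_num)).symm]
    exact Real.logb_le_logb_of_le (by norm_num) (by norm_num) (by exact_mod_cast hk)
  have hn_ge : (4:ℝ) * L ≤ (n:ℝ) := Nat.le_ceil _
  have hn_lt : (n:ℝ) < 4 * L + 1 := Nat.ceil_lt_add_one (by linarith)
  have hn4 : 4 ≤ n := by
    have : (3:ℕ) < n := Nat.lt_ceil.mpr (by push_cast; linarith)
    omega
  have hd47 : n = 4 ∨ 7 ≤ n := by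
    rcases eq_or_lt_of_le hk with heq | hlt
    · left
      have : L = 1 := by rw [hLdef, ← heq]; push_cast; exact Real.logb_self_eq_one (by norm_num)
      rw [hndef, this]
      norm_num
    · right
      have hk3 : 3 ≤ k := hlt
      have h32 : (3:ℝ)/2 < Real.logb 2 3 := by
        rw [Real.lt_logb_iff_rpow_lt (by norm_num) (by norm_num)]
        have hpos : (0:ℝ) < (2:ℝ) ^ ((3:ℝ)/2) := Real.rpow_pos_of_pos (by norm_num) _
        have hsq : ((2:ℝ) ^ ((3:ℝ)/2))^2 = 8 := by
          rw [← Real.rpow_natCast ((2:ℝ) ^ ((3:ℝ)/2)) 2, ← Real.rpow_mul (by norm_num)]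
          norm_num
        nlinarith
      have hL3 : (3:ℝ)/2 < L := by
        refine lt_of_lt_of_le h32 ?_
        rw [hLdef]
        exact Real.logb_le_logb_of_le (by norm_num) (by norm_num) (by exact_mod_cast hk3)
      have : (6:ℕ) < n := Nat.lt_ceil.mpr (by push_cast; linarith)
      omega
  -- threshold
  set x : ℝ := ((n:ℝ) - 3*L)/2 with hxdef
  have hx0 : 0 < x := by rw [hxdef]; have : (3:ℝ)*L < 4*L := by linarith
                         linarith
  set m : ℕ := ⌈x⌉₊ with hmdef
  have hm1 : 1 ≤ m := Nat.one_le_iff_ne_zero.mpr (by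
    simp only [hmdef, ne_eq, Nat.ceil_eq_zero, not_le, hx0])
  set M : ℕ := m - 1 with hMdef
  have hMx : (M:ℝ) < x := by
    have h1 : (m:ℝ) < x + 1 := Nat.ceil_lt_add_one (le_of_lt hx0)
    have h2 : (M:ℝ) = (m:ℝ) - 1 := by
      rw [hMdef]; push_cast [hm1]; ring
    linarith
  have h8M : 8*M ≤ n + 2 := by
    have hL4 : ((n:ℝ) - 1)/4 < L := by linarith
    have : (M:ℝ) < ((n:ℝ) + 3)/8 := by
      rw [hxdef] at hMx; linarith
    have h1 : (8*M:ℝ) < (n:ℝ)+3 := by linarith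
    have h2 : 8*M < n+3 := by exact_mod_cast h1
    omega
  have h3M : 3*M ≤ n + 1 := by omega
  -- core counting inequality
  have hcore : 256 * (n.choose M)^4 < 2^(3*n) := core n M h8M hd47
  have hk4 : k^4 ≤ 2^n := by
    have h2L : (2:ℝ) ^ L = (k:ℝ) := Real.rpow_logb (by norm_num) (by norm_num) (by positivity)
    have : ((k:ℝ))^4 ≤ (2:ℝ)^(n:ℝ) := by
      rw [← h2L, ← Real.rpow_natCast ((2:ℝ)^L) 4, ← Real.rpow_mul (by norm_num)]
      apply Real.rpow_le_rpow_of_exponent_le (by norm_num)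
      push_cast
      linarith
    rw [Real.rpow_natCast] at this
    exact_mod_cast this
  -- the hamming distance
  set D : (Fin n → Bool) → (Fin n → Bool) → ℕ :=
    fun u w => (univ.filter fun t => u t ≠ w t).card with hDdef
  have hDsymm : ∀ u w, D u w = D w u := by
    intro u w
    simp only [hDdef]
    congr 1
    apply Finset.filter_congr
    intro t _
    simp [ne_comm]
  have hDle : ∀ u w, D u w ≤ n := by
    intro u w
    calc D u w ≤ (univ : Finset (Fin n)).card := Finset.card_filter_le _ _
      _ = n := by simp
  have hDself : ∀ u, D u u = 0 := by intro u; simp [hDdef]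
  have hDcompl : ∀ u w, D u (fun t => !(w t)) = n - D u w := by
    intro u w
    have h1 : (univ.filter fun t => u t ≠ !(w t)) = univ.filter fun t => ¬(u t ≠ w t) := by
      apply Finset.filter_congr; intro t _
      cases u t <;> cases w t <;> simp
    have h2 := Finset.card_filter_add_card_filter_not
      (s := (univ : Finset (Fin n))) (p := fun t => u t ≠ w t)
    rw [hDdef]
    simp only at h1 h2 ⊢
    rw [h1]
    simp only [Finset.card_univ, Fintype.card_fin] at h2
    omega
  -- bad sets
  set Bad : (Fin n → Bool) → Finset (Fin n → Bool) :=
    fun u => univ.filter fun w => ¬(|(n:ℝ) - 2*(D u w)| ≤ 3*L) with hBaddef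
  have hself : ∀ u, u ∈ Bad u := by
    intro u
    simp only [hBaddef, Finset.mem_filter, Finset.mem_univ, true_and, hDself u,
      Nat.cast_zero, mul_zero, sub_zero, not_le]
    rw [abs_of_nonneg (by positivity : (0:ℝ) ≤ (n:ℝ))]
    linarith
  have hsym : ∀ u w, u ∈ Bad w → w ∈ Bad u := by
    intro u w h
    simp only [hBaddef, Finset.mem_filter, Finset.mem_univ, true_and] at h ⊢
    rwa [hDsymm]
  have hBadcard : ∀ u, (Bad u).card ≤ 4 * n.choose M := by
    intro u
    set low := univ.filter fun w : Fin n → Bool => D u w ≤ M with hlowdef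
    set high := univ.filter fun w : Fin n → Bool => n - D u w ≤ M with hhighdef
    have hDlt : ∀ w : Fin n → Bool, ((D u w : ℝ) < x) → D u w ≤ M := by
      intro w h
      have : D u w < m := Nat.lt_ceil.mpr h
      omega
    have hsub : Bad u ⊆ low ∪ high := by
      intro w hw
      simp only [hBaddef, Finset.mem_filter, Finset.mem_univ, true_and, not_le] at hw
      rw [Finset.mem_union]
      rcases lt_abs.mp hw with hpos | hneg
      · left
        simp only [hlowdef, Finset.mem_filter, Finset.mem_univ, true_and]
        apply hDlt
        rw [hxdef]; linarith
      · right
        simp only [hhighdef, Finset.mem_filter, Finset.mem_univ, true_and]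
        have hcast : ((n - D u w : ℕ) : ℝ) = (n:ℝ) - (D u w : ℝ) := by
          push_cast [hDle u w]; ring
        have h9 : ((n - D u w : ℕ) : ℝ) < x := by rw [hcast, hxdef]; linarith
        have := Nat.lt_ceil.mpr h9
        omega
    have hlowcard : low.card ≤ 2 * n.choose M := by
      calc low.card ≤ ∑ j ∈ range (M+1), n.choose j := ball_card_le n u M
        _ ≤ 2 * n.choose M := sum_choose_le n M h3M
    have hhighcard : high.card ≤ low.card := by
      apply Finset.card_le_card_of_injOn (fun w => fun t => !(w t))
      · intro w hw
        simp only [hhighdef, Finset.mem_coe, Finset.mem_filter, Finset.mem_univ, true_and] at hw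
        simp only [hlowdef, Finset.mem_coe, Finset.mem_filter, Finset.mem_univ, true_and]
        rw [hDcompl]
        omega
      · intro w1 _ w2 _ heq
        have heq' : (fun t => !(w1 t)) = (fun t => !(w2 t)) := heq
        funext t
        have := congrFun heq' t
        simpa using this
    calc (Bad u).card ≤ (low ∪ high).card := Finset.card_le_card hsub
      _ ≤ low.card + high.card := Finset.card_union_le _ _
      _ ≤ 2 * n.choose M + 2 * n.choose M := by omega
      _ = 4 * n.choose M := by ring
  -- count
  have hcount : k * (4 * n.choose M) < Fintype.card (Fin n → Bool) := by
    have hcard : Fintype.card (Fin n → Bool) = 2^n := by simp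
    rw [hcard]
    have h4 : (k * (4 * n.choose M))^4 < (2^n)^4 := by
      calc (k * (4 * n.choose M))^4 = k^4 * (256 * (n.choose M)^4) := by ring
        _ ≤ 2^n * (256 * (n.choose M)^4) := Nat.mul_le_mul_right _ hk4
        _ < 2^n * 2^(3*n) := by
            exact mul_lt_mul_of_pos_left hcore (by positivity)
        _ = (2^n)^4 := by
            rw [← pow_add, ← pow_mul, show n + 3*n = n*4 by ring]
    exact (Nat.pow_lt_pow_iff_left (by norm_num)).mp h4
  -- greedy
  obtain ⟨S, hScard, hSgood⟩ := greedy k (4 * n.choose M) Bad hBadcard hself hsym hcount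
  set f := (Finset.equivFinOfCardEq hScard).symm with hfdef
  refine ⟨fun i t => if (f i : Fin n → Bool) t then 1 else -1, fun i t => by
    by_cases h : (f i : Fin n → Bool) t <;> simp [h], ?_⟩
  intro i j hij
  -- the sum equals n - 2 D
  have hsum : ∀ a b : Fin n → Bool,
      ∑ t, (if a t then (1:ℝ) else -1) * (if b t then 1 else -1)
        = (n:ℝ) - 2 * (D a b) := by
    intro a b
    have hterm : ∀ t, (if a t then (1:ℝ) else -1) * (if b t then 1 else -1)
        = if a t = b t then 1 else -1 := by
      intro t; cases a t <;> cases b t <;> norm_num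
    rw [Finset.sum_congr rfl fun t _ => hterm t, Finset.sum_ite]
    have hcards := Finset.card_filter_add_card_filter_not
      (s := (univ : Finset (Fin n))) (p := fun t => a t = b t)
    simp only [Finset.card_univ, Fintype.card_fin] at hcards
    have hD : D a b = (univ.filter fun t => ¬(a t = b t)).card := rfl
    simp only [Finset.sum_const, nsmul_eq_mul, mul_one, mul_neg]
    rw [hD]
    have : ((univ.filter fun t => a t = b t).card : ℝ)
        = (n:ℝ) - ((univ.filter fun t => ¬(a t = b t)).card : ℝ) := by
      have hR : ((univ.filter fun t => a t = b t).card : ℝ)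
          + ((univ.filter fun t => ¬(a t = b t)).card : ℝ) = (n:ℝ) := by
        exact_mod_cast hcards
      linarith
    rw [this]
    ring
  -- distinctness
  have hfne : (f i : Fin n → Bool) ≠ (f j : Fin n → Bool) := by
    intro h
    exact hij ((Finset.equivFinOfCardEq hScard).symm.injective (Subtype.ext h))
  have hgood := hSgood (f i : Fin n → Bool) (f i).2 (f j : Fin n → Bool) (f j).2 hfne
  simp only [hBaddef, Finset.mem_filter, Finset.mem_univ, true_and, not_not] at hgood
  rw [hsum]
  exact hgood
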